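/- Define N, D, g : ℝ → ℝ by N(t) = 4*Real.cos (6*t) − 6*Real.cos (5*t) + 2*Real.cos (4*t) + 4*Real.cos (3*t) − 6*Real.cos (2*t) + 2*Real.cos t + 1, D(t) = 2*Real.cos (6*t) − 2*Real.cos (5*t) + 2*Real.cos (3*t) − 2*Real.cos (2*t) + 1, and g(t) = N(t)/D(t). Then g(π) = 1, deriv g π = 0, and iteratedDeriv 2 g π < 0. -/

import Mathlib

/-- The numerator `N(t)` of the ratio `g(t) = Δ_{K₁}(e^{it/2})/Δ_{K₀}(e^{it/2})`. -/
noncomputable def Nfun (t : ℝ) : ℝ :=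
  4 * Real.cos (6 * t) - 6 * Real.cos (5 * t) + 2 * Real.cos (4 * t)
    + 4 * Real.cos (3 * t) - 6 * Real.cos (2 * t) + 2 * Real.cos t + 1

/-- The denominator `D(t)`. -/
noncomputable def Dfun (t : ℝ) : ℝ :=
  2 * Real.cos (6 * t) - 2 * Real.cos (5 * t) + 2 * Real.cos (3 * t)
    - 2 * Real.cos (2 * t) + 1

/-- The ratio `g(t) = N(t)/D(t)`. -/
noncomputable def gfun (t : ℝ) : ℝ := Nfun t / Dfun t

/- ### Auxiliary definitions and lemmas -/

noncomputable def Nd (t : ℝ) : ℝ :=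
  4 * -(Real.sin (6 * t) * 6) - 6 * -(Real.sin (5 * t) * 5) + 2 * -(Real.sin (4 * t) * 4)
    + 4 * -(Real.sin (3 * t) * 3) - 6 * -(Real.sin (2 * t) * 2) + 2 * -Real.sin t

noncomputable def Dd (t : ℝ) : ℝ :=
  2 * -(Real.sin (6 * t) * 6) - 2 * -(Real.sin (5 * t) * 5) + 2 * -(Real.sin (3 * t) * 3)
    - 2 * -(Real.sin (2 * t) * 2)

noncomputable def g1 (t : ℝ) : ℝ :=
  (Nd t * Dfun t - Nfun t * Dd t) / (Dfun t) ^ 2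

lemma hcos (k t : ℝ) : HasDerivAt (fun t => Real.cos (k * t)) (-(Real.sin (k * t) * k)) t := by
  have h := (((hasDerivAt_id t).const_mul k).cos)
  convert h using 1
  simp [mul_comm]
  change -(Real.sin (k * t) * k) = -Real.sin (k * t) * (k * 1); ring

lemma hsin (k t : ℝ) : HasDerivAt (fun t => Real.sin (k * t)) (Real.cos (k * t) * k) t := by
  have h := (((hasDerivAt_id t).const_mul k).sin)
  convert h using 1
  simp [mul_comm]
  change Real.cos (k * t) * k = Real.cos (k * t) * (k * 1); ring

lemma hN (t : ℝ) : HasDerivAt Nfun (Nd t) t := by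
  unfold Nfun Nd
  exact ((((((hcos 6 t).const_mul 4).sub ((hcos 5 t).const_mul 6)).add
    ((hcos 4 t).const_mul 2)).add ((hcos 3 t).const_mul 4)).sub
    ((hcos 2 t).const_mul 6)).add ((Real.hasDerivAt_cos t).const_mul 2) |>.add_const 1

lemma hD (t : ℝ) : HasDerivAt Dfun (Dd t) t := by
  unfold Dfun Dd
  exact ((((hcos 6 t).const_mul 2).sub ((hcos 5 t).const_mul 2)).add
    ((hcos 3 t).const_mul 2)).sub ((hcos 2 t).const_mul 2) |>.add_const 1

noncomputable def Ndd (t : ℝ) : ℝ :=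
  4 * -(Real.cos (6 * t) * 6 * 6) - 6 * -(Real.cos (5 * t) * 5 * 5)
    + 2 * -(Real.cos (4 * t) * 4 * 4) + 4 * -(Real.cos (3 * t) * 3 * 3)
    - 6 * -(Real.cos (2 * t) * 2 * 2) + 2 * -Real.cos t

noncomputable def Ddd (t : ℝ) : ℝ :=
  2 * -(Real.cos (6 * t) * 6 * 6) - 2 * -(Real.cos (5 * t) * 5 * 5)
    + 2 * -(Real.cos (3 * t) * 3 * 3) - 2 * -(Real.cos (2 * t) * 2 * 2)

lemma hNd (t : ℝ) : HasDerivAt Nd (Ndd t) t := by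
  unfold Nd Ndd
  have h6 := (((hsin 6 t).mul_const 6).neg).const_mul 4
  have h5 := (((hsin 5 t).mul_const 5).neg).const_mul 6
  have h4 := (((hsin 4 t).mul_const 4).neg).const_mul 2
  have h3 := (((hsin 3 t).mul_const 3).neg).const_mul 4
  have h2 := (((hsin 2 t).mul_const 2).neg).const_mul 6
  have h1 := ((Real.hasDerivAt_sin t).neg).const_mul 2
  exact ((((h6.sub h5).add h4).add h3).sub h2).add h1

lemma hDd (t : ℝ) : HasDerivAt Dd (Ddd t) t := by
  unfold Dd Ddd
  have h6 := (((hsin 6 t).mul_const 6).neg).const_mul 2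
  have h5 := (((hsin 5 t).mul_const 5).neg).const_mul 2
  have h3 := (((hsin 3 t).mul_const 3).neg).const_mul 2
  have h2 := (((hsin 2 t).mul_const 2).neg).const_mul 2
  exact ((h6.sub h5).add h3).sub h2

lemma c2pi : Real.cos (2 * Real.pi) = 1 := Real.cos_two_pi
lemma c3pi : Real.cos (3 * Real.pi) = -1 := by
  rw [show (3:ℝ) * Real.pi = (1:ℕ) * (2*Real.pi) + Real.pi by push_cast; ring]
  exact Real.cos_nat_mul_two_pi_add_pi 1
lemma c4pi : Real.cos (4 * Real.pi) = 1 := by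
  rw [show (4:ℝ) * Real.pi = (2:ℕ) * (2*Real.pi) by push_cast; ring]
  exact Real.cos_nat_mul_two_pi 2
lemma c5pi : Real.cos (5 * Real.pi) = -1 := by
  rw [show (5:ℝ) * Real.pi = (2:ℕ) * (2*Real.pi) + Real.pi by push_cast; ring]
  exact Real.cos_nat_mul_two_pi_add_pi 2
lemma c6pi : Real.cos (6 * Real.pi) = 1 := by
  rw [show (6:ℝ) * Real.pi = (3:ℕ) * (2*Real.pi) by push_cast; ring]
  exact Real.cos_nat_mul_two_pi 3
lemma skpi (k : ℕ) : Real.sin ((k : ℝ) * Real.pi) = 0 := by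
  have := Real.sin_int_mul_pi k; push_cast at this ⊢; exact this
lemma s2pi : Real.sin (2 * Real.pi) = 0 := by simp [skpi 2]
lemma s3pi : Real.sin (3 * Real.pi) = 0 := by simpa using skpi 3
lemma s4pi : Real.sin (4 * Real.pi) = 0 := by simpa using skpi 4
lemma s5pi : Real.sin (5 * Real.pi) = 0 := by simpa using skpi 5
lemma s6pi : Real.sin (6 * Real.pi) = 0 := by simpa using skpi 6

lemma Npi : Nfun Real.pi = 1 := by
  unfold Nfun
  rw [c2pi, c3pi, c4pi, c5pi, c6pi, Real.cos_pi]; norm_num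

lemma Dpi : Dfun Real.pi = 1 := by
  unfold Dfun
  rw [c2pi, c3pi, c5pi, c6pi]; norm_num

lemma Ndpi : Nd Real.pi = 0 := by
  unfold Nd
  rw [s2pi, s3pi, s4pi, s5pi, s6pi, Real.sin_pi]; norm_num

lemma Ddpi : Dd Real.pi = 0 := by
  unfold Dd
  rw [s2pi, s3pi, s5pi, s6pi]; norm_num

lemma Nddpi : Ndd Real.pi = -264 := by
  unfold Ndd
  rw [c2pi, c3pi, c4pi, c5pi, c6pi, Real.cos_pi]; norm_num

lemma Dddpi : Ddd Real.pi = -96 := by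
  unfold Ddd
  rw [c2pi, c3pi, c5pi, c6pi]; norm_num

lemma hg {t : ℝ} (ht : Dfun t ≠ 0) : HasDerivAt gfun (g1 t) t :=
  (hN t).div (hD t) ht

lemma hg1pi : HasDerivAt g1 (-168) Real.pi := by
  have hDpi : Dfun Real.pi ≠ 0 := by rw [Dpi]; norm_num
  have htop : HasDerivAt (fun t => Nd t * Dfun t - Nfun t * Dd t)
      (Ndd Real.pi * Dfun Real.pi + Nd Real.pi * Dd Real.pi
        - (Nd Real.pi * Dd Real.pi + Nfun Real.pi * Ddd Real.pi)) Real.pi :=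
    ((hNd Real.pi).mul (hD Real.pi)).sub ((hN Real.pi).mul (hDd Real.pi))
  have hbot : HasDerivAt (fun t => (Dfun t) ^ 2)
      ((2 : ℕ) * (Dfun Real.pi) ^ 1 * Dd Real.pi) Real.pi := (hD Real.pi).pow 2
  have hbotne : (Dfun Real.pi) ^ 2 ≠ 0 := pow_ne_zero 2 hDpi
  have h := htop.div hbot hbotne
  have : HasDerivAt g1 (((Ndd Real.pi * Dfun Real.pi + Nd Real.pi * Dd Real.pi
        - (Nd Real.pi * Dd Real.pi + Nfun Real.pi * Ddd Real.pi)) * (Dfun Real.pi) ^ 2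
        - (Nd Real.pi * Dfun Real.pi - Nfun Real.pi * Dd Real.pi)
          * ((2 : ℕ) * (Dfun Real.pi) ^ 1 * Dd Real.pi)) / ((Dfun Real.pi) ^ 2) ^ 2)
      Real.pi := h
  convert this using 1
  rw [Npi, Dpi, Ndpi, Ddpi, Nddpi, Dddpi]
  norm_num

/-- The computational claims `g(π) = 1`, `g′(π) = 0`, `g″(π) < 0` from the proof of
Lemma 5.4. -/
theorem stmt13 :
    gfun Real.pi = 1 ∧ deriv gfun Real.pi = 0 ∧
      iteratedDeriv 2 gfun Real.pi < 0 := by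
  have hDpi : Dfun Real.pi ≠ 0 := by rw [Dpi]; norm_num
  have hval : gfun Real.pi = 1 := by unfold gfun; rw [Npi, Dpi]; norm_num
  have hg1pi0 : g1 Real.pi = 0 := by
    unfold g1; rw [Npi, Dpi, Ndpi, Ddpi]; norm_num
  have hd1 : deriv gfun Real.pi = 0 := by
    rw [(hg hDpi).deriv, hg1pi0]
  refine ⟨hval, hd1, ?_⟩
  -- eventually, Dfun ≠ 0 near π
  have hDc : Continuous Dfun := by unfold Dfun; fun_prop
  have hne : ∀ᶠ t in nhds Real.pi, Dfun t ≠ 0 :=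
    (hDc.continuousAt).eventually_ne hDpi
  have heq : deriv gfun =ᶠ[nhds Real.pi] g1 :=
    hne.mono fun t ht => (hg ht).deriv
  have h2 : iteratedDeriv 2 gfun Real.pi = deriv (deriv gfun) Real.pi := by
    rw [iteratedDeriv_succ, iteratedDeriv_one]
  rw [h2, heq.deriv_eq, hg1pi.deriv]
  norm_num
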